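/- arXiv:math/0607608 — 2 statements merged into one kernel-verified Lean document; each statement's English description precedes it below -/
import Mathlib

section
/- The 6×6 symmetric integer matrix M₂ given by the plumbing graph with a linear chain of vertices of weights (-5,-4,-2,-2,-3) (consecutive chain vertices joined by an edge) together with one extra vertex of weight -3 joined to the second chain vertex (the -4 vertex), is negative definite and satisfies |det M₂| = 289 = 17². -/
/-- The intersection matrix of the plumbing tree `P₂`: a linear chain with weights
`(-5,-4,-2,-2,-3)` (vertices 0–4) and an extra `-3` vertex (vertex 5) joined to the
`-4` vertex. -/
def M₂ : Matrix (Fin 6) (Fin 6) ℤ :=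
  !![-5, 1, 0, 0, 0, 0;
      1, -4, 1, 0, 0, 1;
      0, 1, -2, 1, 0, 0;
      0, 0, 1, -2, 1, 0;
      0, 0, 0, 1, -3, 0;
      0, 1, 0, 0, 0, -3]

lemma M₂_form (x : Fin 6 → ℤ) : dotProduct x ((-M₂).mulVec x) =
    5*x 0^2 + 4*x 1^2 + 2*x 2^2 + 2*x 3^2 + 3*x 4^2 + 3*x 5^2
    - 2*x 0*x 1 - 2*x 1*x 2 - 2*x 2*x 3 - 2*x 3*x 4 - 2*x 1*x 5 := by
  simp only [dotProduct, Matrix.mulVec, Matrix.neg_apply, Fin.sum_univ_six]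
  norm_num [show M₂ 0 0 = -5 from rfl, show M₂ 0 1 = 1 from rfl, show M₂ 0 2 = 0 from rfl,
    show M₂ 0 3 = 0 from rfl, show M₂ 0 4 = 0 from rfl, show M₂ 0 5 = 0 from rfl,
    show M₂ 1 0 = 1 from rfl, show M₂ 1 1 = -4 from rfl, show M₂ 1 2 = 1 from rfl,
    show M₂ 1 3 = 0 from rfl, show M₂ 1 4 = 0 from rfl, show M₂ 1 5 = 1 from rfl,
    show M₂ 2 0 = 0 from rfl, show M₂ 2 1 = 1 from rfl, show M₂ 2 2 = -2 from rfl,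
    show M₂ 2 3 = 1 from rfl, show M₂ 2 4 = 0 from rfl, show M₂ 2 5 = 0 from rfl,
    show M₂ 3 0 = 0 from rfl, show M₂ 3 1 = 0 from rfl, show M₂ 3 2 = 1 from rfl,
    show M₂ 3 3 = -2 from rfl, show M₂ 3 4 = 1 from rfl, show M₂ 3 5 = 0 from rfl,
    show M₂ 4 0 = 0 from rfl, show M₂ 4 1 = 0 from rfl, show M₂ 4 2 = 0 from rfl,
    show M₂ 4 3 = 1 from rfl, show M₂ 4 4 = -3 from rfl, show M₂ 4 5 = 0 from rfl,
    show M₂ 5 0 = 0 from rfl, show M₂ 5 1 = 1 from rfl, show M₂ 5 2 = 0 from rfl,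
    show M₂ 5 3 = 0 from rfl, show M₂ 5 4 = 0 from rfl, show M₂ 5 5 = -3 from rfl]
  ring

lemma M₂_quad_pos (a b c d e f : ℤ)
    (h : 1 ≤ a^2 ∨ 1 ≤ b^2 ∨ 1 ≤ c^2 ∨ 1 ≤ d^2 ∨ 1 ≤ e^2 ∨ 1 ≤ f^2) :
    0 < 5*a^2 + 4*b^2 + 2*c^2 + 2*d^2 + 3*e^2 + 3*f^2 - 2*a*b - 2*b*c - 2*c*d - 2*d*e - 2*b*f := by
  rcases h with h|h|h|h|h|h <;>
  nlinarith [sq_nonneg (a-b), sq_nonneg (b-c), sq_nonneg (c-d), sq_nonneg (d-e), sq_nonneg (b-f),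
    sq_nonneg a, sq_nonneg b, sq_nonneg c, sq_nonneg d, sq_nonneg e, sq_nonneg f]

set_option maxRecDepth 8000 in
set_option maxHeartbeats 1000000 in
lemma M₂_det : M₂.det = 289 := by
  simp [M₂, Matrix.det_succ_row_zero, Fin.sum_univ_succ]
  decide

/-- `M₂` is negative definite and `|det M₂| = 289 = 17²`. -/
theorem M₂_negDef_det : (-M₂).PosDef ∧ M₂.det.natAbs = 289 ∧ 289 = 17 ^ 2 := by
  refine ⟨Matrix.PosDef.of_dotProduct_mulVec_pos ?_ ?_, by rw [M₂_det]; rfl, by norm_num⟩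
  · ext i j
    fin_cases i <;> fin_cases j <;> rfl
  · intro x hx
    have h : ∃ i, x i ≠ 0 := by
      by_contra h
      push_neg at h
      exact hx (funext h)
    obtain ⟨i, hi⟩ := h
    have hsq : 1 ≤ x i ^ 2 := by
      rcases hi.lt_or_gt with h | h <;> nlinarith
    have key := M₂_quad_pos (x 0) (x 1) (x 2) (x 3) (x 4) (x 5) (by fin_cases i <;> simp_all)
    calc (0 : ℤ) < _ := key
    _ = dotProduct x ((-M₂).mulVec x) := (M₂_form x).symm
end

section
/- The 8×8 symmetric integer matrix M₄ given by the plumbing graph with a linear chain of weights (-7,-4,-2,-2,-2,-2,-3) and one extra vertex of weight -3 joined to the second chain vertex (the -4 vertex), is negative definite and satisfies |det M₄| = 625 = 25². -/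
/-- The intersection matrix of the plumbing tree `P₄`: a linear chain with weights
`(-7,-4,-2,-2,-2,-2,-3)` (vertices 0–6) and an extra `-3` vertex (vertex 7) joined to
the `-4` vertex. -/
def M₄ : Matrix (Fin 8) (Fin 8) ℤ :=
  !![-7, 1, 0, 0, 0, 0, 0, 0;
      1, -4, 1, 0, 0, 0, 0, 1;
      0, 1, -2, 1, 0, 0, 0, 0;
      0, 0, 1, -2, 1, 0, 0, 0;
      0, 0, 0, 1, -2, 1, 0, 0;
      0, 0, 0, 0, 1, -2, 1, 0;
      0, 0, 0, 0, 0, 1, -3, 0;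
      0, 1, 0, 0, 0, 0, 0, -3]

/-- Auxiliary upper-triangular matrix used to compute `det M₄`. -/
private def W₄ : Matrix (Fin 8) (Fin 8) ℤ :=
  !![1, 1, 1, 1, 1, 1, 1, 11;
     0, 7, 7, 7, 7, 7, 7, 77;
     0, 0, 27, 27, 27, 27, 27, 63;
     0, 0, 0, 47, 47, 47, 47, 49;
     0, 0, 0, 0, 67, 67, 67, 35;
     0, 0, 0, 0, 0, 87, 87, 21;
     0, 0, 0, 0, 0, 0, 107, 7;
     0, 0, 0, 0, 0, 0, 0, 234]

/-- Auxiliary lower-triangular matrix: `M₄ * W₄ = T₄`. -/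
private def T₄ : Matrix (Fin 8) (Fin 8) ℤ :=
  !![-7, 0, 0, 0, 0, 0, 0, 0;
     1, -27, 0, 0, 0, 0, 0, 0;
     0, 7, -47, 0, 0, 0, 0, 0;
     0, 0, 27, -67, 0, 0, 0, 0;
     0, 0, 0, 47, -87, 0, 0, 0;
     0, 0, 0, 0, 67, -107, 0, 0;
     0, 0, 0, 0, 0, 87, -234, 0;
     0, 7, 7, 7, 7, 7, 7, -625]

private lemma M₄e00 : M₄ 0 0 = (-7) := rfl
private lemma M₄e01 : M₄ 0 1 = (1) := rfl
private lemma M₄e02 : M₄ 0 2 = (0) := rfl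
private lemma M₄e03 : M₄ 0 3 = (0) := rfl
private lemma M₄e04 : M₄ 0 4 = (0) := rfl
private lemma M₄e05 : M₄ 0 5 = (0) := rfl
private lemma M₄e06 : M₄ 0 6 = (0) := rfl
private lemma M₄e07 : M₄ 0 7 = (0) := rfl
private lemma M₄e10 : M₄ 1 0 = (1) := rfl
private lemma M₄e11 : M₄ 1 1 = (-4) := rfl
private lemma M₄e12 : M₄ 1 2 = (1) := rfl
private lemma M₄e13 : M₄ 1 3 = (0) := rfl
private lemma M₄e14 : M₄ 1 4 = (0) := rfl
private lemma M₄e15 : M₄ 1 5 = (0) := rfl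
private lemma M₄e16 : M₄ 1 6 = (0) := rfl
private lemma M₄e17 : M₄ 1 7 = (1) := rfl
private lemma M₄e20 : M₄ 2 0 = (0) := rfl
private lemma M₄e21 : M₄ 2 1 = (1) := rfl
private lemma M₄e22 : M₄ 2 2 = (-2) := rfl
private lemma M₄e23 : M₄ 2 3 = (1) := rfl
private lemma M₄e24 : M₄ 2 4 = (0) := rfl
private lemma M₄e25 : M₄ 2 5 = (0) := rfl
private lemma M₄e26 : M₄ 2 6 = (0) := rfl
private lemma M₄e27 : M₄ 2 7 = (0) := rfl
private lemma M₄e30 : M₄ 3 0 = (0) := rfl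
private lemma M₄e31 : M₄ 3 1 = (0) := rfl
private lemma M₄e32 : M₄ 3 2 = (1) := rfl
private lemma M₄e33 : M₄ 3 3 = (-2) := rfl
private lemma M₄e34 : M₄ 3 4 = (1) := rfl
private lemma M₄e35 : M₄ 3 5 = (0) := rfl
private lemma M₄e36 : M₄ 3 6 = (0) := rfl
private lemma M₄e37 : M₄ 3 7 = (0) := rfl
private lemma M₄e40 : M₄ 4 0 = (0) := rfl
private lemma M₄e41 : M₄ 4 1 = (0) := rfl
private lemma M₄e42 : M₄ 4 2 = (0) := rfl
private lemma M₄e43 : M₄ 4 3 = (1) := rfl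
private lemma M₄e44 : M₄ 4 4 = (-2) := rfl
private lemma M₄e45 : M₄ 4 5 = (1) := rfl
private lemma M₄e46 : M₄ 4 6 = (0) := rfl
private lemma M₄e47 : M₄ 4 7 = (0) := rfl
private lemma M₄e50 : M₄ 5 0 = (0) := rfl
private lemma M₄e51 : M₄ 5 1 = (0) := rfl
private lemma M₄e52 : M₄ 5 2 = (0) := rfl
private lemma M₄e53 : M₄ 5 3 = (0) := rfl
private lemma M₄e54 : M₄ 5 4 = (1) := rfl
private lemma M₄e55 : M₄ 5 5 = (-2) := rfl
private lemma M₄e56 : M₄ 5 6 = (1) := rfl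
private lemma M₄e57 : M₄ 5 7 = (0) := rfl
private lemma M₄e60 : M₄ 6 0 = (0) := rfl
private lemma M₄e61 : M₄ 6 1 = (0) := rfl
private lemma M₄e62 : M₄ 6 2 = (0) := rfl
private lemma M₄e63 : M₄ 6 3 = (0) := rfl
private lemma M₄e64 : M₄ 6 4 = (0) := rfl
private lemma M₄e65 : M₄ 6 5 = (1) := rfl
private lemma M₄e66 : M₄ 6 6 = (-3) := rfl
private lemma M₄e67 : M₄ 6 7 = (0) := rfl
private lemma M₄e70 : M₄ 7 0 = (0) := rfl
private lemma M₄e71 : M₄ 7 1 = (1) := rfl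
private lemma M₄e72 : M₄ 7 2 = (0) := rfl
private lemma M₄e73 : M₄ 7 3 = (0) := rfl
private lemma M₄e74 : M₄ 7 4 = (0) := rfl
private lemma M₄e75 : M₄ 7 5 = (0) := rfl
private lemma M₄e76 : M₄ 7 6 = (0) := rfl
private lemma M₄e77 : M₄ 7 7 = (-3) := rfl

private lemma aux_sq_zero {c s : ℤ} (hc : 0 < c) (h : c * s ≤ 0) (hs : 0 ≤ s) : s = 0 := by
  have h2 : c * s = 0 := le_antisymm h (mul_nonneg hc.le hs)
  rcases mul_eq_zero.mp h2 with h' | h'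
  · exact absurd h' hc.ne'
  · exact h'

private lemma hMW₄ : M₄ * W₄ = T₄ := by decide

private lemma hW₄det : W₄.det = 1296442777266 := by
  rw [Matrix.det_of_upperTriangular (show ∀ i j : Fin 8, j < i → W₄ i j = 0 by
    intro i j h; fin_cases i <;> fin_cases j <;> simp_all [W₄])]
  rw [Fin.prod_univ_eight]
  norm_num [show W₄ 0 0 = 1 from rfl, show W₄ 1 1 = 7 from rfl, show W₄ 2 2 = 27 from rfl,
    show W₄ 3 3 = 47 from rfl, show W₄ 4 4 = 67 from rfl, show W₄ 5 5 = 87 from rfl,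
    show W₄ 6 6 = 107 from rfl, show W₄ 7 7 = 234 from rfl]

private lemma hT₄det : T₄.det = 810276735791250 := by
  rw [Matrix.det_of_lowerTriangular T₄
    (show ∀ i j : Fin 8, i < j → T₄ i j = 0 by
      intro i j h; fin_cases i <;> fin_cases j <;> simp_all [T₄])]
  rw [Fin.prod_univ_eight]
  norm_num [show T₄ 0 0 = -7 from rfl, show T₄ 1 1 = -27 from rfl, show T₄ 2 2 = -47 from rfl,
    show T₄ 3 3 = -67 from rfl, show T₄ 4 4 = -87 from rfl, show T₄ 5 5 = -107 from rfl,
    show T₄ 6 6 = -234 from rfl, show T₄ 7 7 = -625 from rfl]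

private lemma M₄_det : M₄.det = 625 := by
  have h : M₄.det * W₄.det = T₄.det :=
    (Matrix.det_mul M₄ W₄).symm.trans (congrArg Matrix.det hMW₄)
  rw [hW₄det, hT₄det] at h
  omega

set_option maxHeartbeats 1000000 in
/-- `M₄` is negative definite and `|det M₄| = 625 = 25²`. -/
theorem M₄_negDef_det : (-M₄).PosDef ∧ M₄.det.natAbs = 625 ∧ 625 = 25 ^ 2 := by
  refine ⟨Matrix.posDef_iff_dotProduct_mulVec.mpr ⟨?_, ?_⟩, ?_, rfl⟩
  · ext i j
    fin_cases i <;> fin_cases j <;> rfl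
  · intro x hx
    have hQ : dotProduct (star x) ((-M₄).mulVec x) =
        7*(x 0)*(x 0) + 4*(x 1)*(x 1) + 2*(x 2)*(x 2) + 2*(x 3)*(x 3) + 2*(x 4)*(x 4) + 2*(x 5)*(x 5) + 3*(x 6)*(x 6) + 3*(x 7)*(x 7) - 2*(x 0)*(x 1) - 2*(x 1)*(x 2) - 2*(x 2)*(x 3) - 2*(x 3)*(x 4) - 2*(x 4)*(x 5) - 2*(x 5)*(x 6) - 2*(x 1)*(x 7) := by
      simp only [dotProduct, Matrix.mulVec, Matrix.neg_apply, Pi.star_apply, star_trivial,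
        Fin.sum_univ_eight, M₄e00, M₄e01, M₄e02, M₄e03, M₄e04, M₄e05, M₄e06, M₄e07, M₄e10, M₄e11, M₄e12, M₄e13, M₄e14, M₄e15, M₄e16, M₄e17, M₄e20, M₄e21, M₄e22, M₄e23, M₄e24, M₄e25, M₄e26, M₄e27, M₄e30, M₄e31, M₄e32, M₄e33, M₄e34, M₄e35, M₄e36, M₄e37, M₄e40, M₄e41, M₄e42, M₄e43, M₄e44, M₄e45, M₄e46, M₄e47, M₄e50, M₄e51, M₄e52, M₄e53, M₄e54, M₄e55, M₄e56, M₄e57, M₄e60, M₄e61, M₄e62, M₄e63, M₄e64, M₄e65, M₄e66, M₄e67, M₄e70, M₄e71, M₄e72, M₄e73, M₄e74, M₄e75, M₄e76, M₄e77]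
      ring
    rw [hQ]
    by_contra hle
    push_neg at hle
    have key : (810276735791250 : ℤ) * (7*(x 0)*(x 0) + 4*(x 1)*(x 1) + 2*(x 2)*(x 2) + 2*(x 3)*(x 3) + 2*(x 4)*(x 4) + 2*(x 5)*(x 5) + 3*(x 6)*(x 6) + 3*(x 7)*(x 7) - 2*(x 0)*(x 1) - 2*(x 1)*(x 2) - 2*(x 2)*(x 3) - 2*(x 3)*(x 4) - 2*(x 4)*(x 5) - 2*(x 5)*(x 6) - 2*(x 1)*(x 7)) =
        115753819398750 * (7*(x 0) - (x 1))^2 + 4287178496250 * (27*(x 1) - 7*(x 2) - 7*(x 7))^2 + 638515946250 * (47*(x 2) - 27*(x 3) - 7*(x 7))^2 + 257312396250 * (67*(x 3) - 47*(x 4) - 7*(x 7))^2 + 139007846250 * (87*(x 4) - 67*(x 5) - 7*(x 7))^2 + 87042296250 * (107*(x 5) - 87*(x 6) - 7*(x 7))^2 + 32361879375 * (234*(x 6) - 7*(x 7))^2 + 5540353749 * (625*(x 7))^2 := by ring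
    have hNQ : (810276735791250 : ℤ) * (7*(x 0)*(x 0) + 4*(x 1)*(x 1) + 2*(x 2)*(x 2) + 2*(x 3)*(x 3) + 2*(x 4)*(x 4) + 2*(x 5)*(x 5) + 3*(x 6)*(x 6) + 3*(x 7)*(x 7) - 2*(x 0)*(x 1) - 2*(x 1)*(x 2) - 2*(x 2)*(x 3) - 2*(x 3)*(x 4) - 2*(x 4)*(x 5) - 2*(x 5)*(x 6) - 2*(x 1)*(x 7)) ≤ 0 :=
      mul_nonpos_iff.mpr (Or.inl ⟨by norm_num, hle⟩)
    rw [key] at hNQ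
    have n1 : (0:ℤ) ≤ 115753819398750 * (7*(x 0) - (x 1))^2 := mul_nonneg (by norm_num) (sq_nonneg _)
    have n2 : (0:ℤ) ≤ 4287178496250 * (27*(x 1) - 7*(x 2) - 7*(x 7))^2 := mul_nonneg (by norm_num) (sq_nonneg _)
    have n3 : (0:ℤ) ≤ 638515946250 * (47*(x 2) - 27*(x 3) - 7*(x 7))^2 := mul_nonneg (by norm_num) (sq_nonneg _)
    have n4 : (0:ℤ) ≤ 257312396250 * (67*(x 3) - 47*(x 4) - 7*(x 7))^2 := mul_nonneg (by norm_num) (sq_nonneg _)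
    have n5 : (0:ℤ) ≤ 139007846250 * (87*(x 4) - 67*(x 5) - 7*(x 7))^2 := mul_nonneg (by norm_num) (sq_nonneg _)
    have n6 : (0:ℤ) ≤ 87042296250 * (107*(x 5) - 87*(x 6) - 7*(x 7))^2 := mul_nonneg (by norm_num) (sq_nonneg _)
    have n7 : (0:ℤ) ≤ 32361879375 * (234*(x 6) - 7*(x 7))^2 := mul_nonneg (by norm_num) (sq_nonneg _)
    have n8 : (0:ℤ) ≤ 5540353749 * (625*(x 7))^2 := mul_nonneg (by norm_num) (sq_nonneg _)
    have e1 : (7*(x 0) - (x 1))^2 = 0 := aux_sq_zero (show (0:ℤ) < 115753819398750 by norm_num) (by linarith) (sq_nonneg _)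
    have e2 : (27*(x 1) - 7*(x 2) - 7*(x 7))^2 = 0 := aux_sq_zero (show (0:ℤ) < 4287178496250 by norm_num) (by linarith) (sq_nonneg _)
    have e3 : (47*(x 2) - 27*(x 3) - 7*(x 7))^2 = 0 := aux_sq_zero (show (0:ℤ) < 638515946250 by norm_num) (by linarith) (sq_nonneg _)
    have e4 : (67*(x 3) - 47*(x 4) - 7*(x 7))^2 = 0 := aux_sq_zero (show (0:ℤ) < 257312396250 by norm_num) (by linarith) (sq_nonneg _)
    have e5 : (87*(x 4) - 67*(x 5) - 7*(x 7))^2 = 0 := aux_sq_zero (show (0:ℤ) < 139007846250 by norm_num) (by linarith) (sq_nonneg _)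
    have e6 : (107*(x 5) - 87*(x 6) - 7*(x 7))^2 = 0 := aux_sq_zero (show (0:ℤ) < 87042296250 by norm_num) (by linarith) (sq_nonneg _)
    have e7 : (234*(x 6) - 7*(x 7))^2 = 0 := aux_sq_zero (show (0:ℤ) < 32361879375 by norm_num) (by linarith) (sq_nonneg _)
    have e8 : (625*(x 7))^2 = 0 := aux_sq_zero (show (0:ℤ) < 5540353749 by norm_num) (by linarith) (sq_nonneg _)
    rw [sq_eq_zero_iff] at e1 e2 e3 e4 e5 e6 e7 e8
    have h7 : x 7 = 0 := by linarith
    have h6 : x 6 = 0 := by linarith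
    have h5 : x 5 = 0 := by linarith
    have h4 : x 4 = 0 := by linarith
    have h3 : x 3 = 0 := by linarith
    have h2 : x 2 = 0 := by linarith
    have h1 : x 1 = 0 := by linarith
    have h0 : x 0 = 0 := by linarith
    apply hx
    funext i
    fin_cases i
    · exact h0
    · exact h1
    · exact h2
    · exact h3
    · exact h4
    · exact h5
    · exact h6
    · exact h7
  · rw [M₄_det]
    rfl
end
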